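/- r*(φ_ν)/(4(ν+1)) → 1 as ν → ∞, and moreover r*(φ_ν) = 4(ν+1)(1 - 1/ν + O(ν^{-2})) as ν → ∞. -/

import Mathlib

open Filter Asymptotics

/-- If the radius of starlikeness `r ν` of `φ_ν(z) = 2^ν Γ(ν+1) z^{1-ν/2} J_ν(√z)`
satisfies the Euler–Rayleigh bounds `4 ρ₃^{-1/3} < r ν < 4 ρ₃/ρ₄`, then
`r ν/(4(ν+1)) → 1` as `ν → ∞`, and moreover
`r ν = 4(ν+1)(1 - 1/ν + O(ν⁻²))` as `ν → ∞`. -/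
theorem radius_asymptotics (r : ℝ → ℝ)
    (hbounds : ∀ ν : ℝ, -1 < ν →
      4 * ((ν ^ 2 + 8 * ν + 23) / ((ν + 1) ^ 3 * (ν + 2) * (ν + 3))) ^ (-(1 : ℝ) / 3)
        < r ν ∧
      r ν < 4 * ((ν ^ 2 + 8 * ν + 23) / ((ν + 1) ^ 3 * (ν + 2) * (ν + 3))) /
        ((ν ^ 4 + 15 * ν ^ 3 + 90 * ν ^ 2 + 267 * ν + 287) /
          ((ν + 1) ^ 4 * (ν + 2) ^ 2 * (ν + 3) * (ν + 4)))) :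
    Tendsto (fun ν => r ν / (4 * (ν + 1))) atTop (nhds 1) ∧
    (fun ν : ℝ => r ν / (4 * (ν + 1)) - (1 - 1 / ν)) =O[atTop]
      (fun ν : ℝ => 1 / ν ^ 2) := by
  have key : ∀ ν : ℝ, 2 ≤ ν →
      0 ≤ r ν / (4 * (ν + 1)) - (1 - 1 / ν) ∧
      r ν / (4 * (ν + 1)) - (1 - 1 / ν) ≤ 480 / ν ^ 2 := by
    intro ν hν
    obtain ⟨hlo, hhi⟩ := hbounds ν (by linarith)
    have hν0 : (0:ℝ) < ν := by linarith
    have h1 : (0:ℝ) < ν + 1 := by linarith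
    have h2 : (0:ℝ) < ν + 2 := by linarith
    have h3 : (0:ℝ) < ν + 3 := by linarith
    have h4 : (0:ℝ) < ν + 4 := by linarith
    have hq23 : (0:ℝ) < ν ^ 2 + 8 * ν + 23 := by nlinarith
    have hq56 : (0:ℝ) < ν ^ 2 + 5 * ν + 6 := by nlinarith
    have hD : (0:ℝ) < ν ^ 4 + 15 * ν ^ 3 + 90 * ν ^ 2 + 267 * ν + 287 := by nlinarith
    set ρ₃ : ℝ := (ν ^ 2 + 8 * ν + 23) / ((ν + 1) ^ 3 * (ν + 2) * (ν + 3)) with hρ₃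
    clear_value ρ₃
    have hρ₃pos : 0 < ρ₃ := hρ₃ ▸ div_pos hq23 (by positivity)
    set a : ℝ := ρ₃ ^ (-(1:ℝ)/3) / (ν + 1) with ha
    clear_value a
    have hapos : 0 < a := ha ▸ div_pos (Real.rpow_pos_of_pos hρ₃pos _) h1
    have ha3 : a ^ 3 = (ν ^ 2 + 5 * ν + 6) / (ν ^ 2 + 8 * ν + 23) := by
      have ht : (ρ₃ ^ (-(1:ℝ)/3)) ^ (3:ℕ) = ρ₃⁻¹ := by
        rw [← Real.rpow_natCast (ρ₃ ^ (-(1:ℝ)/3)) 3, ← Real.rpow_mul hρ₃pos.le]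
        norm_num [Real.rpow_neg_one]
      rw [ha, div_pow, ht, hρ₃]
      rw [inv_div]
      rw [div_div]
      rw [div_eq_div_iff (by positivity) hq23.ne']
      ring
    set b : ℝ := 1 - 1 / ν with hb
    clear_value b
    have hbeq : b = (ν - 1) / ν := by rw [hb]; field_simp
    have hbhalf : (1:ℝ)/2 ≤ b := by
      rw [hbeq, le_div_iff₀ hν0]; linarith
    have hbpos : 0 < b := by linarith
    -- lower bound: b ≤ a
    have hb3 : b ^ 3 ≤ a ^ 3 := by
      rw [ha3, hbeq, div_pow, div_le_div_iff₀ (by positivity) hq23]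
      nlinarith [hν0, sq_nonneg ν, pow_pos hν0 3]
    have hba : b ≤ a := (pow_le_pow_iff_left₀ hbpos.le hapos.le (by norm_num)).mp hb3
    -- lower bound on r
    have hlo' : a < r ν / (4 * (ν + 1)) := by
      have hrw : a = 4 * ρ₃ ^ (-(1:ℝ)/3) / (4 * (ν + 1)) := by
        rw [ha, mul_div_mul_left _ _ (by norm_num : (4:ℝ) ≠ 0)]
      rw [hrw]
      exact (div_lt_div_iff_of_pos_right (by linarith)).2 hlo
    -- upper bound on r
    have hUeq : 4 * ρ₃ /
        ((ν ^ 4 + 15 * ν ^ 3 + 90 * ν ^ 2 + 267 * ν + 287) /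
          ((ν + 1) ^ 4 * (ν + 2) ^ 2 * (ν + 3) * (ν + 4))) / (4 * (ν + 1)) =
        (ν ^ 4 + 14 * ν ^ 3 + 79 * ν ^ 2 + 202 * ν + 184) /
          (ν ^ 4 + 15 * ν ^ 3 + 90 * ν ^ 2 + 267 * ν + 287) := by
      rw [hρ₃]
      rw [div_eq_div_iff (by positivity) hD.ne']
      field_simp
      ring
    have hUb : (ν ^ 4 + 14 * ν ^ 3 + 79 * ν ^ 2 + 202 * ν + 184) /
          (ν ^ 4 + 15 * ν ^ 3 + 90 * ν ^ 2 + 267 * ν + 287) ≤ b + 480 / ν ^ 2 := by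
      have hrhs : b + 480 / ν ^ 2 = (ν * (ν - 1) + 480) / ν ^ 2 := by
        rw [hbeq]; field_simp
      rw [hrhs, div_le_div_iff₀ hD (by positivity)]
      nlinarith [pow_pos hν0 4, pow_pos hν0 3, pow_pos hν0 2, hν0]
    have hhi' : r ν / (4 * (ν + 1)) ≤ b + 480 / ν ^ 2 := by
      have := (div_lt_div_iff_of_pos_right (show (0:ℝ) < 4 * (ν + 1) by linarith)).2 hhi
      rw [hUeq] at this
      linarith
    constructor
    · linarith
    · linarith
  have hO : (fun ν : ℝ => r ν / (4 * (ν + 1)) - (1 - 1 / ν)) =O[atTop]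
      (fun ν : ℝ => 1 / ν ^ 2) := by
    rw [isBigO_iff]
    refine ⟨480, ?_⟩
    filter_upwards [eventually_ge_atTop (2:ℝ)] with ν hν
    obtain ⟨hk1, hk2⟩ := key ν hν
    have hν0 : (0:ℝ) < ν := by linarith
    rw [Real.norm_eq_abs, Real.norm_eq_abs, abs_of_nonneg hk1,
      abs_of_nonneg (by positivity : (0:ℝ) ≤ 1 / ν ^ 2)]
    calc r ν / (4 * (ν + 1)) - (1 - 1 / ν) ≤ 480 / ν ^ 2 := hk2
      _ = 480 * (1 / ν ^ 2) := by ring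
  refine ⟨?_, hO⟩
  have ht0 : Tendsto (fun ν : ℝ => 1 / ν ^ 2) atTop (nhds 0) := by
    have h := tendsto_inv_atTop_zero (𝕜 := ℝ)
    have hp : Tendsto (fun ν : ℝ => ν ^ 2) atTop atTop :=
      tendsto_pow_atTop (by norm_num)
    simpa [one_div, Function.comp_def] using h.comp hp
  have hdiff0 := hO.trans_tendsto ht0
  have h1ν : Tendsto (fun ν : ℝ => 1 - 1 / ν) atTop (nhds 1) := by
    have := tendsto_const_nhds (x := (1:ℝ)) (f := atTop) |>.sub
      (tendsto_inv_atTop_zero (𝕜 := ℝ))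
    simpa [one_div] using this
  have := hdiff0.add h1ν
  simpa using this
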